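/- Assume in addition that ρ_g and λ are continuous on [0,∞) × X. Fix T > 0, S_0 ≥ 0 and a continuously differentiable f : X → ℝ. Let ζⁿ, ζ : [0,T] → M_F(X) be such that u ↦ ⟨ζⁿ_u, g⟩ and u ↦ ⟨ζ_u, g⟩ are Borel measurable for every continuous g, with sup_n sup_{0 ≤ u ≤ T} ⟨ζⁿ_u, 1⟩ < ∞ and sup_{0 ≤ u ≤ T} ⟨ζ_u, 1⟩ < ∞. If sup_{0 ≤ u ≤ T} d_PR(ζⁿ_u, ζ_u) → 0 as n → ∞ (uniform convergence in the Lévy–Prokhorov metric), then Ψ_t(ζⁿ) → Ψ_t(ζ) for every t ∈ [0,T]. -/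

import Mathlib

open MeasureTheory Filter

noncomputable section

/-- The integrand of the substrate equation:
`ρ_s(S_u, ξ_u) = D (s_in − S_u) − (k/V) ∫_X ρ_g(S_u, x) ξ_u(dx)` with `X = [0, mmax]`. -/
def subIntegrand (mmax D sIn k V : ℝ) (rg : ℝ → ℝ → ℝ)
    (S : ℝ → ℝ) (ξ : ℝ → Measure ℝ) (u : ℝ) : ℝ :=
  D * (sIn - S u) - (k / V) * ∫ x in Set.Icc (0:ℝ) mmax, rg (S u) x ∂(ξ u)

/-- The integrand of the weak population equation, for a test function `f`:
`∫_X ρ_g(S_u,x) f'(x) ξ_u(dx)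
 + ∫_X ∫_0^1 λ(S_u,x) (f(αx) + f((1−α)x) − f(x)) Q(dα) ξ_u(dx) − D ⟨ξ_u, f⟩`. -/
def popIntegrand (mmax D : ℝ) (rg lam : ℝ → ℝ → ℝ) (Q : Measure ℝ) (f : ℝ → ℝ)
    (S : ℝ → ℝ) (ξ : ℝ → Measure ℝ) (u : ℝ) : ℝ :=
  (∫ x in Set.Icc (0:ℝ) mmax, rg (S u) x * deriv f x ∂(ξ u))
  + (∫ x in Set.Icc (0:ℝ) mmax,
      ∫ α in Set.Icc (0:ℝ) 1, lam (S u) x * (f (α * x) + f ((1 - α) * x) - f x) ∂Q ∂(ξ u))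
  - D * ∫ x in Set.Icc (0:ℝ) mmax, f x ∂(ξ u)

/-- Weak solution `(S, ξ)` of the limit chemostat system:
`S : [0,∞) → [0,∞)` is continuous, `ξ` takes values in the finite measures on
`X = [0, mmax]`, `u ↦ ⟨ξ_u, g⟩` is Borel measurable and locally bounded for every
continuous `g`, and the substrate and population equations (i) and (ii) hold
(with genuinely integrable time integrands). -/
structure IsWeakSolution (mmax D sIn k V : ℝ) (rg lam : ℝ → ℝ → ℝ) (Q : Measure ℝ)
    (S : ℝ → ℝ) (ξ : ℝ → Measure ℝ) : Prop where
  S_cont : Continuous S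
  S_nonneg : ∀ t, 0 ≤ t → 0 ≤ S t
  xi_fin : ∀ t, IsFiniteMeasure (ξ t)
  xi_supp : ∀ t, (ξ t) (Set.Icc (0:ℝ) mmax)ᶜ = 0
  xi_meas : ∀ g : ℝ → ℝ, Continuous g →
      Measurable fun u => ∫ x in Set.Icc (0:ℝ) mmax, g x ∂(ξ u)
  xi_locbdd : ∀ g : ℝ → ℝ, Continuous g → ∀ T : ℝ, ∃ C : ℝ,
      ∀ u ∈ Set.Icc (0:ℝ) T, |∫ x in Set.Icc (0:ℝ) mmax, g x ∂(ξ u)| ≤ C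
  S_int : ∀ t, 0 ≤ t →
      IntervalIntegrable (subIntegrand mmax D sIn k V rg S ξ) volume 0 t
  S_eq : ∀ t, 0 ≤ t →
      S t = S 0 + ∫ u in (0:ℝ)..t, subIntegrand mmax D sIn k V rg S ξ u
  xi_int : ∀ f : ℝ → ℝ, ContDiff ℝ 1 f → ∀ t, 0 ≤ t →
      IntervalIntegrable (popIntegrand mmax D rg lam Q f S ξ) volume 0 t
  xi_eq : ∀ f : ℝ → ℝ, ContDiff ℝ 1 f → ∀ t, 0 ≤ t →
      (∫ x in Set.Icc (0:ℝ) mmax, f x ∂(ξ t))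
        = (∫ x in Set.Icc (0:ℝ) mmax, f x ∂(ξ 0))
          + ∫ u in (0:ℝ)..t, popIntegrand mmax D rg lam Q f S ξ u

/-- The standing hypotheses on the data of the chemostat model. -/
structure ChemostatHyps (mmax D sIn k V gbar lamBar kg klam : ℝ)
    (rg lam : ℝ → ℝ → ℝ) (Q : Measure ℝ) : Prop where
  mmax_pos : 0 < mmax
  D_pos : 0 < D
  sIn_pos : 0 < sIn
  k_pos : 0 < k
  V_pos : 0 < V
  gbar_pos : 0 < gbar
  lamBar_pos : 0 < lamBar
  kg_nonneg : 0 ≤ kg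
  klam_nonneg : 0 ≤ klam
  rg_meas : ∀ s : ℝ, Measurable (rg s)
  rg_nonneg : ∀ s, 0 ≤ s → ∀ x ∈ Set.Icc (0:ℝ) mmax, 0 ≤ rg s x
  rg_le : ∀ s, 0 ≤ s → ∀ x ∈ Set.Icc (0:ℝ) mmax, rg s x ≤ gbar
  rg_lip : ∀ s₁ s₂, 0 ≤ s₁ → 0 ≤ s₂ → ∀ x ∈ Set.Icc (0:ℝ) mmax,
      |rg s₁ x - rg s₂ x| ≤ kg * |s₁ - s₂|
  rg_zero : ∀ x ∈ Set.Icc (0:ℝ) mmax, rg 0 x = 0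
  rg_mmax : ∀ s, 0 ≤ s → rg s mmax = 0
  lam_meas : ∀ s : ℝ, Measurable (lam s)
  lam_nonneg : ∀ s, 0 ≤ s → ∀ x ∈ Set.Icc (0:ℝ) mmax, 0 ≤ lam s x
  lam_le : ∀ s, 0 ≤ s → ∀ x ∈ Set.Icc (0:ℝ) mmax, lam s x ≤ lamBar
  lam_lip : ∀ s₁ s₂, 0 ≤ s₁ → 0 ≤ s₂ → ∀ x ∈ Set.Icc (0:ℝ) mmax,
      |lam s₁ x - lam s₂ x| ≤ klam * |s₁ - s₂|
  Q_prob : IsProbabilityMeasure Q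
  Q_supp : Q (Set.Icc (0:ℝ) 1)ᶜ = 0
  Q_symm : Q.map (fun α => 1 - α) = Q

/-- The Lévy–Prokhorov distance
`d_PR(μ, ν) = inf{ε > 0 : μ(F) ≤ ν(F^ε) + ε and ν(F) ≤ μ(F^ε) + ε for all closed F}`. -/
def prokhorovDist {Ω : Type*} [MeasurableSpace Ω] [MetricSpace Ω]
    (μ ν : Measure Ω) : ℝ :=
  sInf {ε : ℝ | 0 < ε ∧ ∀ F : Set Ω, IsClosed F →
    μ F ≤ ν (Metric.thickening ε F) + ENNReal.ofReal ε
    ∧ ν F ≤ μ (Metric.thickening ε F) + ENNReal.ofReal ε}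

/-- The functional `Ψ_t(ζ)` built from a given substrate trajectory `Sz = S^ζ`:
`Ψ_t(ζ) = ⟨ζ_t, f⟩ − ⟨ζ_0, f⟩ − ∫_0^t [⋯] du`. -/
def Psi (mmax D : ℝ) (rg lam : ℝ → ℝ → ℝ) (Q : Measure ℝ) (f : ℝ → ℝ)
    (Sz : ℝ → ℝ) (ζ : ℝ → Measure ℝ) (t : ℝ) : ℝ :=
  (∫ x in Set.Icc (0:ℝ) mmax, f x ∂(ζ t)) - (∫ x in Set.Icc (0:ℝ) mmax, f x ∂(ζ 0))
    - ∫ u in (0:ℝ)..t, popIntegrand mmax D rg lam Q f Sz ζ u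


/-! ### Auxiliary machinery -/

section ChemAux

open Set Metric ENNReal Topology BoundedContinuousFunction

lemma chem_bridge {μ ν : Measure ℝ} [IsFiniteMeasure μ] [IsFiniteMeasure ν] {ε ε' : ℝ}
    (h : prokhorovDist μ ν ≤ ε) (hε : 0 ≤ ε) (hlt : ε < ε') :
    levyProkhorovEDist μ ν ≤ ENNReal.ofReal ε' := by
  set 𝒮 := {ε : ℝ | 0 < ε ∧ ∀ F : Set ℝ, IsClosed F →
    μ F ≤ ν (Metric.thickening ε F) + ENNReal.ofReal ε
    ∧ ν F ≤ μ (Metric.thickening ε F) + ENNReal.ofReal ε} with h𝒮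
  have hne : 𝒮.Nonempty := by
    refine ⟨(μ Set.univ).toReal + (ν Set.univ).toReal + 1, ?_, ?_⟩
    · positivity
    · intro F _
      constructor
      · refine le_add_left ?_
        calc μ F ≤ μ Set.univ := measure_mono (subset_univ _)
        _ = ENNReal.ofReal (μ Set.univ).toReal := (ENNReal.ofReal_toReal (measure_ne_top _ _)).symm
        _ ≤ _ := by
            apply ENNReal.ofReal_le_ofReal
            have := ENNReal.toReal_nonneg (a := ν Set.univ)
            linarith
      · refine le_add_left ?_
        calc ν F ≤ ν Set.univ := measure_mono (subset_univ _)
        _ = ENNReal.ofReal (ν Set.univ).toReal := (ENNReal.ofReal_toReal (measure_ne_top _ _)).symm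
        _ ≤ _ := by
            apply ENNReal.ofReal_le_ofReal
            have := ENNReal.toReal_nonneg (a := μ Set.univ)
            linarith
  have hbdd : BddBelow 𝒮 := ⟨0, fun x hx => hx.1.le⟩
  have hsinf : sInf 𝒮 < ε' := lt_of_le_of_lt h hlt
  obtain ⟨δ, hδS, hδlt⟩ := (csInf_lt_iff hbdd hne).mp hsinf
  have hε' : 0 < ε' := lt_of_le_of_lt hε hlt
  apply sInf_le
  intro B hB
  have htr : (ENNReal.ofReal ε').toReal = ε' := ENNReal.toReal_ofReal hε'.le
  rw [htr]
  have key : ∀ (κ₁ κ₂ : Measure ℝ), IsFiniteMeasure κ₁ →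
      (∀ F : Set ℝ, IsClosed F → κ₁ F ≤ κ₂ (Metric.thickening δ F) + ENNReal.ofReal δ) →
      κ₁ B ≤ κ₂ (Metric.thickening ε' B) + ENNReal.ofReal ε' := by
    intro κ₁ κ₂ hfin hcond
    by_contra hcon
    push_neg at hcon
    haveI := hfin
    obtain ⟨F, hFB, hFcl, hFgt⟩ := hB.exists_lt_isClosed_of_ne_top (measure_ne_top _ _) hcon
    have : κ₁ F ≤ κ₂ (Metric.thickening ε' B) + ENNReal.ofReal ε' := by
      refine (hcond F hFcl).trans ?_
      exact add_le_add (measure_mono ((Metric.thickening_mono hδlt.le F).trans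
          (Metric.thickening_subset_of_subset ε' hFB))) (ENNReal.ofReal_le_ofReal hδlt.le)
    exact absurd (lt_of_lt_of_le hFgt this) (lt_irrefl _)
  exact ⟨key μ ν ‹_› (fun F hF => (hδS.2 F hF).1), key ν μ ‹_› (fun F hF => (hδS.2 F hF).2)⟩

lemma chem_thick_tendsto (f : ℝ →ᵇ ℝ) {A : Set ℝ} (A_finmeas : volume A ≠ ∞)
    (μ : Measure ℝ) [IsFiniteMeasure μ] :
    Tendsto (fun ε ↦ ∫ t in A, ENNReal.toReal (μ (thickening ε {a | t ≤ f a}))) (𝓝[>] (0 : ℝ))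
      (𝓝 (∫ t in A, ENNReal.toReal (μ {a | t ≤ f a}))) := by
  apply tendsto_integral_filter_of_dominated_convergence (G := ℝ) (μ := volume.restrict A)
        (F := fun ε t ↦ ENNReal.toReal (μ (thickening ε {a | t ≤ f a})))
        (f := fun t ↦ ENNReal.toReal (μ {a | t ≤ f a})) (fun _ => (μ Set.univ).toReal)
  · apply Eventually.of_forall fun n ↦ Measurable.aestronglyMeasurable ?_
    apply Measurable.ennreal_toReal
    apply Antitone.measurable (fun s t hst ↦ ?_)
    exact measure_mono <| thickening_subset_of_subset _ <| fun ω h ↦ hst.trans h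
  · apply Eventually.of_forall (fun i ↦ ?_)
    apply Eventually.of_forall (fun t ↦ ?_)
    simp only [Real.norm_eq_abs, ENNReal.abs_toReal]
    exact ENNReal.toReal_mono (measure_ne_top _ _) (measure_mono (subset_univ _))
  · have aux : IsFiniteMeasure (volume.restrict A) := ⟨by simpa [lt_top_iff_ne_top] using A_finmeas⟩
    apply integrable_const
  · apply Eventually.of_forall (fun t ↦ ?_)
    apply (ENNReal.tendsto_toReal (measure_ne_top _ _)).comp
    apply tendsto_measure_thickening_of_isClosed
    · exact ⟨1, Real.zero_lt_one, measure_ne_top _ _⟩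
    · exact isClosed_le continuous_const f.continuous

variable {μs : ℕ → Measure ℝ} {μ : Measure ℝ}

lemma chem_eps_aux [∀ n, IsFiniteMeasure (μs n)] [IsFiniteMeasure μ]
    (h : Tendsto (fun n => levyProkhorovEDist (μs n) μ) atTop (𝓝 0)) :
    ∃ εs : ℕ → ℝ, (∀ n, 0 < εs n) ∧
      (∀ n, levyProkhorovEDist (μs n) μ < ENNReal.ofReal (εs n)) ∧
      Tendsto εs atTop (𝓝[>] (0:ℝ)) := by
  refine ⟨fun n => (levyProkhorovEDist (μs n) μ).toReal + (1:ℝ)/(n+1), ?_, ?_, ?_⟩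
  · intro n
    have : (0:ℝ) < 1/(n+1) := by positivity
    have := ENNReal.toReal_nonneg (a := levyProkhorovEDist (μs n) μ)
    linarith
  · intro n
    rw [ENNReal.ofReal_add ENNReal.toReal_nonneg (by positivity),
      ENNReal.ofReal_toReal (levyProkhorovEDist_ne_top _ _)]
    exact ENNReal.lt_add_right (levyProkhorovEDist_ne_top _ _)
      (by simp; positivity)
  · rw [tendsto_nhdsWithin_iff]
    constructor
    · have h1 : Tendsto (fun n => (levyProkhorovEDist (μs n) μ).toReal) atTop (𝓝 0) := by
        simpa [Function.comp_def] using (ENNReal.tendsto_toReal (by simp)).comp h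
      have h2 : Tendsto (fun n : ℕ => (1:ℝ)/(n+1)) atTop (𝓝 0) :=
        tendsto_one_div_add_atTop_nhds_zero_nat
      simpa using h1.add h2
    · refine Eventually.of_forall (fun n => ?_)
      have : (0:ℝ) < 1/(n+1) := by positivity
      have := ENNReal.toReal_nonneg (a := levyProkhorovEDist (μs n) μ)
      simp only [Set.mem_Ioi]; linarith

lemma chem_mass_tendsto [∀ n, IsFiniteMeasure (μs n)] [IsFiniteMeasure μ]
    (h : Tendsto (fun n => levyProkhorovEDist (μs n) μ) atTop (𝓝 0)) :
    Tendsto (fun n => ((μs n) Set.univ).toReal) atTop (𝓝 ((μ Set.univ).toReal)) := by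
  obtain ⟨εs, εpos, εlt, εlim⟩ := chem_eps_aux h
  have εlim' : Tendsto εs atTop (𝓝 0) := εlim.mono_right nhdsWithin_le_nhds
  have hub : ∀ n, ((μs n) Set.univ).toReal ≤ (μ Set.univ).toReal + εs n := by
    intro n
    have := left_measure_le_of_levyProkhorovEDist_lt (εlt n) (B := Set.univ) MeasurableSet.univ
    have h2 : (μs n) Set.univ ≤ μ Set.univ + ENNReal.ofReal (εs n) :=
      this.trans (add_le_add (measure_mono (subset_univ _)) le_rfl)
    have h3 := ENNReal.toReal_mono (by finiteness) h2
    rwa [ENNReal.toReal_add (measure_ne_top _ _) ENNReal.ofReal_ne_top,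
      ENNReal.toReal_ofReal (εpos n).le] at h3
  have hlb : ∀ n, (μ Set.univ).toReal - εs n ≤ ((μs n) Set.univ).toReal := by
    intro n
    have := right_measure_le_of_levyProkhorovEDist_lt (εlt n) (B := Set.univ) MeasurableSet.univ
    have h2 : μ Set.univ ≤ (μs n) Set.univ + ENNReal.ofReal (εs n) :=
      this.trans (add_le_add (measure_mono (subset_univ _)) le_rfl)
    have h3 := ENNReal.toReal_mono (by finiteness) h2
    rw [ENNReal.toReal_add (measure_ne_top _ _) ENNReal.ofReal_ne_top,
      ENNReal.toReal_ofReal (εpos n).le] at h3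
    linarith
  have l1 : Tendsto (fun n => (μ Set.univ).toReal - εs n) atTop (𝓝 ((μ Set.univ).toReal)) := by
    simpa using (tendsto_const_nhds.sub εlim')
  have l2 : Tendsto (fun n => (μ Set.univ).toReal + εs n) atTop (𝓝 ((μ Set.univ).toReal)) := by
    simpa using (tendsto_const_nhds.add εlim')
  exact tendsto_of_tendsto_of_tendsto_of_le_of_le l1 l2 hlb hub

lemma chem_int_le_eventually [∀ n, IsFiniteMeasure (μs n)] [IsFiniteMeasure μ]
    (h : Tendsto (fun n => levyProkhorovEDist (μs n) μ) atTop (𝓝 0))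
    (f : ℝ →ᵇ ℝ) (f_nn : ∀ x, 0 ≤ f x) {δ : ℝ} (hδ : 0 < δ) :
    ∀ᶠ n in atTop, ∫ x, f x ∂(μs n) ≤ (∫ x, f x ∂μ) + δ := by
  obtain ⟨εs, εpos, εlt, εlim⟩ := chem_eps_aux h
  have εlim' : Tendsto εs atTop (𝓝 0) := εlim.mono_right nhdsWithin_le_nhds
  have key := (chem_thick_tendsto f (A := Set.Ioc 0 ‖f‖) (by simp) μ).comp εlim
  simp only [← measureReal_def] at key
  rw [← BoundedContinuousFunction.integral_eq_integral_meas_le f μ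
    (Eventually.of_forall f_nn)] at key
  have ev1 : ∀ᶠ n in atTop,
      (∫ t in Set.Ioc 0 ‖f‖, ENNReal.toReal (μ (thickening (εs n) {a | t ≤ f a})))
        < (∫ x, f x ∂μ) + δ/2 :=
    key (tendsto_id.eventually_lt_const (by linarith)
      |>.mono (fun z hz => hz) : ∀ᶠ z in 𝓝 (∫ x, f x ∂μ), z < (∫ x, f x ∂μ) + δ/2)
  have ev2 : ∀ᶠ n in atTop, εs n * ‖f‖ < δ/2 + εs n * 0 := by
    have : Tendsto (fun n => εs n * ‖f‖) atTop (𝓝 0) := by simpa using εlim'.mul_const ‖f‖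
    have := this (Iio_mem_nhds (show (0:ℝ) < δ/2 by linarith))
    filter_upwards [this] with n hn
    simpa using hn
  filter_upwards [ev1, ev2] with n h1 h2
  have bound := BoundedContinuousFunction.integral_le_of_levyProkhorovEDist_lt
    (μs n) μ (εpos n) (εlt n) f (Eventually.of_forall f_nn)
  simp only [mul_zero, add_zero] at h2
  calc ∫ x, f x ∂(μs n)
      ≤ (∫ t in Set.Ioc 0 ‖f‖, ENNReal.toReal (μ (thickening (εs n) {a | t ≤ f a})))
        + εs n * ‖f‖ := bound
    _ ≤ ((∫ x, f x ∂μ) + δ/2) + δ/2 := by linarith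
    _ = (∫ x, f x ∂μ) + δ := by ring

lemma chem_int_tendsto_of_nonneg [∀ n, IsFiniteMeasure (μs n)] [IsFiniteMeasure μ]
    (h : Tendsto (fun n => levyProkhorovEDist (μs n) μ) atTop (𝓝 0))
    (f : ℝ →ᵇ ℝ) (f_nn : ∀ x, 0 ≤ f x) :
    Tendsto (fun n => ∫ x, f x ∂(μs n)) atTop (𝓝 (∫ x, f x ∂μ)) := by
  rw [Metric.tendsto_atTop]
  intro δ hδ
  have h3 := chem_int_le_eventually h f f_nn (show (0:ℝ) < δ/3 by linarith)
  set g : ℝ →ᵇ ℝ := BoundedContinuousFunction.const ℝ ‖f‖ - f with hg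
  have g_nn : ∀ x, 0 ≤ g x := by
    intro x
    simp only [hg, BoundedContinuousFunction.sub_apply, BoundedContinuousFunction.const_apply]
    have := BoundedContinuousFunction.apply_le_norm f x
    linarith
  have h4 := chem_int_le_eventually h g g_nn (show (0:ℝ) < δ/3 by linarith)
  have hmass := chem_mass_tendsto h
  have h5 : ∀ᶠ n in atTop, ‖f‖ * |((μs n) Set.univ).toReal - (μ Set.univ).toReal| < δ/3 := by
    have : Tendsto (fun n => ‖f‖ * (((μs n) Set.univ).toReal - (μ Set.univ).toReal)) atTop
        (𝓝 0) := by
      have := (hmass.sub (tendsto_const_nhds (x := (μ Set.univ).toReal))).const_mul ‖f‖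
      simpa using this
    have := this (Metric.ball_mem_nhds 0 (show (0:ℝ) < δ/3 by linarith))
    filter_upwards [this] with n hn
    simpa [Real.dist_eq] using hn
  have gint : ∀ (κ : Measure ℝ), IsFiniteMeasure κ → ∫ x, g x ∂κ
      = ‖f‖ * (κ Set.univ).toReal - ∫ x, f x ∂κ := by
    intro κ hκ
    haveI := hκ
    simp only [hg]
    simp only [BoundedContinuousFunction.coe_sub, Pi.sub_apply,
      BoundedContinuousFunction.const_apply]
    rw [integral_sub (integrable_const _) (BoundedContinuousFunction.integrable κ f)]
    congr 1
    simp [mul_comm, measureReal_def]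
  rw [← Filter.eventually_atTop]
  filter_upwards [h3, h4, h5] with n h3 h4 h5
  rw [Real.dist_eq]
  rw [gint (μs n) inferInstance, gint μ inferInstance] at h4
  rw [abs_sub_lt_iff]
  have hna := neg_abs_le (((μs n) Set.univ).toReal - (μ Set.univ).toReal)
  have hsa := le_abs_self (((μs n) Set.univ).toReal - (μ Set.univ).toReal)
  have hnf : (0:ℝ) ≤ ‖f‖ := norm_nonneg f
  constructor <;> nlinarith

lemma chem_int_tendsto [∀ n, IsFiniteMeasure (μs n)] [IsFiniteMeasure μ]
    (h : Tendsto (fun n => levyProkhorovEDist (μs n) μ) atTop (𝓝 0))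
    (f : ℝ →ᵇ ℝ) :
    Tendsto (fun n => ∫ x, f x ∂(μs n)) atTop (𝓝 (∫ x, f x ∂μ)) := by
  set g : ℝ →ᵇ ℝ := f + BoundedContinuousFunction.const ℝ ‖f‖ with hg
  have g_nn : ∀ x, 0 ≤ g x := by
    intro x
    simp only [hg, BoundedContinuousFunction.add_apply, BoundedContinuousFunction.const_apply]
    have h2 : |f x| ≤ ‖f‖ := by simpa [Real.norm_eq_abs] using f.norm_coe_le_norm x
    have := (abs_le.mp h2).1
    linarith
  have key := chem_int_tendsto_of_nonneg h g g_nn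
  have hmass := chem_mass_tendsto h
  have gint : ∀ (κ : Measure ℝ), IsFiniteMeasure κ → ∫ x, g x ∂κ
      = (∫ x, f x ∂κ) + ‖f‖ * (κ Set.univ).toReal := by
    intro κ hκ
    haveI := hκ
    simp only [hg]
    simp only [BoundedContinuousFunction.coe_add, Pi.add_apply,
      BoundedContinuousFunction.const_apply]
    rw [integral_add (BoundedContinuousFunction.integrable κ f) (integrable_const _)]
    congr 1
    simp [mul_comm, measureReal_def]
  have key2 : Tendsto (fun n => (∫ x, g x ∂(μs n)) - ‖f‖ * (((μs n) Set.univ)).toReal) atTop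
      (𝓝 ((∫ x, g x ∂μ) - ‖f‖ * ((μ Set.univ)).toReal)) :=
    key.sub (tendsto_const_nhds.mul hmass)
  have : (fun n => (∫ x, g x ∂(μs n)) - ‖f‖ * (((μs n) Set.univ)).toReal)
      = fun n => ∫ x, f x ∂(μs n) := by
    funext n
    rw [gint (μs n) inferInstance]; ring
  rw [this, gint μ inferInstance] at key2
  simpa using key2

/-! ### clamping -/

def clampI (m x : ℝ) : ℝ := max 0 (min x m)

lemma continuous_clampI (m : ℝ) : Continuous (clampI m) :=
  continuous_const.max ((continuous_id.min continuous_const))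

lemma clampI_mem {m : ℝ} (hm : 0 ≤ m) (x : ℝ) : clampI m x ∈ Set.Icc 0 m := by
  constructor
  · exact le_max_left _ _
  · rcases le_total x m with h | h
    · simp [clampI, min_eq_left h, hm, max_le_iff, h]
    · simp [clampI, min_eq_right h, hm]

lemma clampI_eq {m x : ℝ} (hx : x ∈ Set.Icc 0 m) : clampI m x = x := by
  rcases hx with ⟨h0, h1⟩
  simp [clampI, min_eq_left h1, max_eq_right h0]

lemma chem_setint_eq_clamp {mmax : ℝ} (κ : Measure ℝ) (hsupp : κ (Set.Icc (0:ℝ) mmax)ᶜ = 0)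
    (g : ℝ → ℝ) :
    ∫ x in Set.Icc (0:ℝ) mmax, g x ∂κ = ∫ x, g (clampI mmax x) ∂κ := by
  have hres : κ.restrict (Set.Icc (0:ℝ) mmax) = κ :=
    Measure.restrict_eq_self_of_ae_mem (ae_iff.mpr hsupp)
  rw [show (∫ x in Set.Icc (0:ℝ) mmax, g x ∂κ) = ∫ x in Set.Icc (0:ℝ) mmax,
      g (clampI mmax x) ∂κ from setIntegral_congr_fun measurableSet_Icc
      (fun x hx => by rw [clampI_eq hx]), hres]

lemma chem_setint_tendsto {mmax : ℝ} (hm : 0 ≤ mmax)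
    [∀ n, IsFiniteMeasure (μs n)] [IsFiniteMeasure μ]
    (hsupp_n : ∀ n, (μs n) (Set.Icc (0:ℝ) mmax)ᶜ = 0)
    (hsupp : μ (Set.Icc (0:ℝ) mmax)ᶜ = 0)
    (h : Tendsto (fun n => levyProkhorovEDist (μs n) μ) atTop (𝓝 0))
    {g : ℝ → ℝ} (hg : Continuous g) :
    Tendsto (fun n => ∫ x in Set.Icc (0:ℝ) mmax, g x ∂(μs n)) atTop
      (𝓝 (∫ x in Set.Icc (0:ℝ) mmax, g x ∂μ)) := by
  obtain ⟨M, hM⟩ := isCompact_Icc.exists_bound_of_continuousOn (hg.continuousOn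
    (s := Set.Icc (0:ℝ) mmax))
  have hgc : Continuous (fun x => g (clampI mmax x)) := hg.comp (continuous_clampI mmax)
  set F : ℝ →ᵇ ℝ := BoundedContinuousFunction.ofNormedAddCommGroup _ hgc M
    (fun x => hM _ (clampI_mem hm x)) with hF
  have key := chem_int_tendsto h F
  have hFx : ∀ x, F x = g (clampI mmax x) := fun x => rfl
  simp only [hFx] at key
  simpa only [chem_setint_eq_clamp (μs _) (hsupp_n _) g, chem_setint_eq_clamp μ hsupp g] using key

/-! ### Gronwall, integral form -/

lemma chem_gronwall {φ : ℝ → ℝ} {T b A : ℝ} (hb : 0 ≤ b) (hA : 0 ≤ A)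
    (hφc : Continuous φ) (hφnn : ∀ u, 0 ≤ φ u)
    (h : ∀ t ∈ Set.Icc 0 T, φ t ≤ b * (∫ u in (0:ℝ)..t, φ u) + A) :
    ∀ t ∈ Set.Icc 0 T, φ t ≤ A * Real.exp (b * T) := by
  intro t ht
  set F : ℝ → ℝ := fun x => ∫ u in (0:ℝ)..x, φ u with hF
  have hFd : ∀ x : ℝ, HasDerivAt F (φ x) x := by
    intro x
    exact intervalIntegral.integral_hasDerivAt_right (hφc.intervalIntegrable 0 x)
      (hφc.stronglyMeasurable.stronglyMeasurableAtFilter) hφc.continuousAt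
  have hFnn : ∀ x, 0 ≤ x → 0 ≤ F x := by
    intro x hx
    exact intervalIntegral.integral_nonneg hx (fun u _ => hφnn u)
  have key := norm_le_gronwallBound_of_norm_deriv_right_le (f := F) (f' := φ)
    (δ := 0) (K := b) (ε := A) (a := 0) (b := T)
    (fun x _ => (hFd x).continuousAt.continuousWithinAt)
    (fun x _ => (hFd x).hasDerivWithinAt)
    (by simp [hF, intervalIntegral.integral_same])
    (by
      intro x hx
      rw [Real.norm_eq_abs, Real.norm_eq_abs, abs_of_nonneg (hφnn x),
        abs_of_nonneg (hFnn x hx.1)]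
      exact h x ⟨hx.1, hx.2.le⟩)
  have hFt := key t ht
  rw [Real.norm_eq_abs, abs_of_nonneg (hFnn t ht.1)] at hFt
  have hstep : φ t ≤ b * gronwallBound 0 b A (t - 0) + A := by
    refine (h t ht).trans ?_
    have := mul_le_mul_of_nonneg_left hFt hb
    linarith
  rcases eq_or_lt_of_le hb with hb0 | hb0
  · subst b
    rw [gronwallBound_K0] at hstep
    simp only [zero_mul, zero_add] at hstep ⊢
    rw [Real.exp_zero]
    linarith
  · rw [gronwallBound_of_K_ne_0 hb0.ne'] at hstep
    simp only [sub_zero, zero_mul, zero_add] at hstep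
    have heq : b * (A / b * (Real.exp (b * t) - 1)) + A = A * Real.exp (b * t) := by
      field_simp
      ring
    rw [heq] at hstep
    have hexp : Real.exp (b * t) ≤ Real.exp (b * T) :=
      Real.exp_le_exp.mpr (by nlinarith [ht.2, ht.1])
    exact hstep.trans (by nlinarith [Real.exp_pos (b*t)])

/-! ### integral helpers -/

lemma chem_integrableOn_K {κ : Measure ℝ} [IsFiniteMeasure κ] {K : Set ℝ} (hK : MeasurableSet K)
    {ψ : ℝ → ℝ} (hm : AEStronglyMeasurable ψ (κ.restrict K)) {M : ℝ}
    (hb : ∀ x ∈ K, |ψ x| ≤ M) : IntegrableOn ψ K κ := by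
  refine ⟨hm, HasFiniteIntegral.of_bounded (C := M) ?_⟩
  filter_upwards [ae_restrict_mem hK] with x hx
  simpa [Real.norm_eq_abs] using hb x hx

lemma chem_setint_diff_bound {κ : Measure ℝ} [IsFiniteMeasure κ] {K : Set ℝ}
    (hK : MeasurableSet K)
    {ψ₁ ψ₂ : ℝ → ℝ} (h₁ : IntegrableOn ψ₁ K κ) (h₂ : IntegrableOn ψ₂ K κ) {M : ℝ}
    (hM : ∀ x ∈ K, |ψ₁ x - ψ₂ x| ≤ M) :
    |(∫ x in K, ψ₁ x ∂κ) - ∫ x in K, ψ₂ x ∂κ| ≤ M * (κ K).toReal := by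
  have key := norm_setIntegral_le_of_norm_le_const (μ := κ) (s := K)
    (f := fun x => ψ₁ x - ψ₂ x) (measure_lt_top _ _)
    (fun x hx => by simpa [Real.norm_eq_abs] using hM x hx)
  rw [integral_sub h₁ h₂] at key
  simpa [Real.norm_eq_abs, measureReal_def] using key

lemma chem_setint_abs_bound {κ : Measure ℝ} {K : Set ℝ} [IsFiniteMeasure κ]
    (hK : MeasurableSet K)
    {ψ : ℝ → ℝ} {M : ℝ} (hM : ∀ x ∈ K, |ψ x| ≤ M) :
    |∫ x in K, ψ x ∂κ| ≤ M * (κ K).toReal := by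
  have key := norm_setIntegral_le_of_norm_le_const (μ := κ) (s := K) (f := ψ)
    (measure_lt_top _ _) (fun x hx => by simpa [Real.norm_eq_abs] using hM x hx)
  simpa [Real.norm_eq_abs, measureReal_def] using key

lemma chem_aemeas_comp {Φ : ℝ → ℝ → ℝ} (hc : ∀ u, Continuous fun s => Φ s u)
    (hm : ∀ s, Measurable fun u => Φ s u) {S : ℝ → ℝ} {s : Set ℝ}
    (hS : AEMeasurable S (volume.restrict s)) :
    AEMeasurable (fun u => Φ (S u) u) (volume.restrict s) := by
  have huc : Measurable (Function.uncurry Φ) :=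
    measurable_uncurry_of_continuous_of_measurable hc hm
  exact huc.comp_aemeasurable (hS.prodMk aemeasurable_id)

lemma chem_meas_integral_param {mmax : ℝ} {G : ℝ → ℝ → ℝ} {ξ : ℝ → Measure ℝ}
    (hξfin : ∀ u, IsFiniteMeasure (ξ u))
    (hξmeas : ∀ g : ℝ → ℝ, Continuous g →
      Measurable fun u => ∫ x in Set.Icc (0:ℝ) mmax, g x ∂ξ u)
    (hGc : ∀ s, Continuous (G s))
    {L : ℝ} (hL : 0 ≤ L) (hGlip : ∀ s₁ s₂ x, |G s₁ x - G s₂ x| ≤ L * |s₁ - s₂|)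
    {S : ℝ → ℝ} {s : Set ℝ} (hS : AEMeasurable S (volume.restrict s)) :
    AEMeasurable (fun u => ∫ x in Set.Icc (0:ℝ) mmax, G (S u) x ∂ξ u)
      (volume.restrict s) := by
  apply chem_aemeas_comp (Φ := fun s u => ∫ x in Set.Icc (0:ℝ) mmax, G s x ∂ξ u)
    ?_ (fun s => hξmeas (G s) (hGc s)) hS
  intro u
  haveI := hξfin u
  have hint : ∀ s₀ : ℝ, IntegrableOn (G s₀) (Set.Icc (0:ℝ) mmax) (ξ u) := by
    intro s₀
    obtain ⟨M, hM⟩ := isCompact_Icc.exists_bound_of_continuousOn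
      ((hGc s₀).continuousOn (s := Set.Icc (0:ℝ) mmax))
    exact chem_integrableOn_K measurableSet_Icc
      ((hGc s₀).aestronglyMeasurable.restrict) hM
  have hlip : LipschitzWith (Real.toNNReal (L * ((ξ u) (Set.Icc (0:ℝ) mmax)).toReal))
      (fun s => ∫ x in Set.Icc (0:ℝ) mmax, G s x ∂ξ u) := by
    apply LipschitzWith.of_dist_le_mul
    intro s₁ s₂
    rw [Real.dist_eq, Real.dist_eq,
      Real.coe_toNNReal _ (by positivity)]
    calc |(∫ x in Set.Icc (0:ℝ) mmax, G s₁ x ∂ξ u) - ∫ x in Set.Icc (0:ℝ) mmax, G s₂ x ∂ξ u|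
        ≤ (L * |s₁ - s₂|) * ((ξ u) (Set.Icc (0:ℝ) mmax)).toReal :=
          chem_setint_diff_bound measurableSet_Icc (hint s₁) (hint s₂)
            (fun x _ => hGlip s₁ s₂ x)
      _ = L * ((ξ u) (Set.Icc (0:ℝ) mmax)).toReal * |s₁ - s₂| := by ring
  exact hlip.continuous

lemma chem_continuous_hQ {f : ℝ → ℝ} (hf : Continuous f) (Q : Measure ℝ) [IsFiniteMeasure Q] :
    Continuous (fun x => ∫ α in Set.Icc (0:ℝ) 1,
      (f (α * x) + f ((1 - α) * x) - f x) ∂Q) := by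
  rw [continuous_iff_continuousAt]
  intro x₀
  set R : ℝ := |x₀| + 1 with hR
  obtain ⟨M, hM⟩ := isCompact_Icc.exists_bound_of_continuousOn
    (hf.continuousOn (s := Set.Icc (-R) R))
  apply continuousAt_of_dominated (bound := fun _ => 3 * M)
  · filter_upwards with x
    apply Continuous.aestronglyMeasurable
    exact ((hf.comp (continuous_id.mul continuous_const)).add
      (hf.comp ((continuous_const.sub continuous_id).mul continuous_const))).sub
      continuous_const
  · have hev : ∀ᶠ x in 𝓝 x₀, |x| ≤ R := by
      have : ∀ᶠ x in 𝓝 x₀, x ∈ Metric.closedBall x₀ 1 :=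
        Metric.closedBall_mem_nhds x₀ one_pos
      filter_upwards [this] with x hx
      rw [Metric.mem_closedBall, Real.dist_eq] at hx
      calc |x| = |x₀ + (x - x₀)| := by ring_nf
        _ ≤ |x₀| + |x - x₀| := abs_add_le _ _
        _ ≤ R := by rw [hR]; linarith [abs_sub_comm x x₀ ▸ hx]
    filter_upwards [hev] with x hx
    filter_upwards [ae_restrict_mem measurableSet_Icc] with α hα
    have hb : ∀ y : ℝ, |y| ≤ R → |f y| ≤ M := fun y hy =>
      hM y ⟨neg_le_of_abs_le hy |>.trans_eq' rfl, le_of_abs_le hy⟩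
    have h1 : |f (α * x)| ≤ M := by
      apply hb
      rw [abs_mul]
      have : |α| ≤ 1 := by rw [abs_of_nonneg hα.1]; exact hα.2
      nlinarith [abs_nonneg x, abs_nonneg α]
    have h2 : |f ((1 - α) * x)| ≤ M := by
      apply hb
      rw [abs_mul]
      have : |1 - α| ≤ 1 := by rw [abs_of_nonneg (by linarith [hα.2])]; linarith [hα.1]
      nlinarith [abs_nonneg x]
    have h3 : |f x| ≤ M := hb x hx
    rw [Real.norm_eq_abs]
    calc |f (α * x) + f ((1 - α) * x) - f x|
        ≤ |f (α * x) + f ((1 - α) * x)| + |f x| := abs_sub _ _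
      _ ≤ (|f (α * x)| + |f ((1 - α) * x)|) + |f x| := add_le_add (abs_add_le _ _) le_rfl
      _ ≤ 3 * M := by linarith
  · exact integrable_const _
  · filter_upwards with α
    exact (((hf.comp (continuous_const.mul continuous_id)).add
      (hf.comp (continuous_const.mul continuous_id))).sub hf).continuousAt

end ChemAux

open Set Metric ENNReal Topology BoundedContinuousFunction

/-- Assume moreover that `ρ_g` and `λ` are continuous on `[0,∞) × X`.
If `ζⁿ → ζ` uniformly on `[0,T]` in the Lévy–Prokhorov metric, the masses being uniformly
bounded, then `Ψ_t(ζⁿ) → Ψ_t(ζ)` for every `t ∈ [0,T]`. -/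
theorem Psi_continuous_in_prokhorov
    (mmax D sIn k V gbar lamBar kg klam : ℝ)
    (rg lam : ℝ → ℝ → ℝ) (Q : Measure ℝ)
    (hyp : ChemostatHyps mmax D sIn k V gbar lamBar kg klam rg lam Q)
    (hrg_cont : ContinuousOn (fun sx : ℝ × ℝ => rg sx.1 sx.2)
      (Set.Ici 0 ×ˢ Set.Icc 0 mmax))
    (hlam_cont : ContinuousOn (fun sx : ℝ × ℝ => lam sx.1 sx.2)
      (Set.Ici 0 ×ˢ Set.Icc 0 mmax))
    -- `ρ_g`, `λ` are extended to negative concentrations by `g(s,x) = g(max(s,0),x)`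
    (hrg_ext : ∀ s x, rg s x = rg (max s 0) x)
    (hlam_ext : ∀ s x, lam s x = lam (max s 0) x)
    (T : ℝ) (hT : 0 < T) (S₀ : ℝ) (hS₀ : 0 ≤ S₀)
    (f : ℝ → ℝ) (hf : ContDiff ℝ 1 f)
    (ζn : ℕ → ℝ → Measure ℝ) (ζ : ℝ → Measure ℝ)
    (hfin_n : ∀ n u, IsFiniteMeasure (ζn n u)) (hfin : ∀ u, IsFiniteMeasure (ζ u))
    (hsupp_n : ∀ n u, (ζn n u) (Set.Icc (0:ℝ) mmax)ᶜ = 0)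
    (hsupp : ∀ u, (ζ u) (Set.Icc (0:ℝ) mmax)ᶜ = 0)
    (hmeas_n : ∀ n, ∀ g : ℝ → ℝ, Continuous g →
      Measurable fun u => ∫ x in Set.Icc (0:ℝ) mmax, g x ∂(ζn n u))
    (hmeas : ∀ g : ℝ → ℝ, Continuous g →
      Measurable fun u => ∫ x in Set.Icc (0:ℝ) mmax, g x ∂(ζ u))
    -- `sup_n sup_{0 ≤ u ≤ T} ⟨ζⁿ_u, 1⟩ < ∞` and `sup_{0 ≤ u ≤ T} ⟨ζ_u, 1⟩ < ∞`
    (C : ℝ)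
    (hmass_n : ∀ n, ∀ u ∈ Set.Icc (0:ℝ) T, ((ζn n u) (Set.Icc (0:ℝ) mmax)).toReal ≤ C)
    (hmass : ∀ u ∈ Set.Icc (0:ℝ) T, ((ζ u) (Set.Icc (0:ℝ) mmax)).toReal ≤ C)
    -- the substrate trajectories `S^{ζⁿ}` and `S^ζ`
    (Szn : ℕ → ℝ → ℝ) (Sz : ℝ → ℝ)
    (hSzn_cont : ∀ n, ContinuousOn (Szn n) (Set.Icc 0 T))
    (hSz_cont : ContinuousOn Sz (Set.Icc 0 T))
    (hSzn_eq : ∀ n, ∀ t ∈ Set.Icc (0:ℝ) T,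
      Szn n t = S₀ + ∫ u in (0:ℝ)..t, subIntegrand mmax D sIn k V rg (Szn n) (ζn n) u)
    (hSz_eq : ∀ t ∈ Set.Icc (0:ℝ) T,
      Sz t = S₀ + ∫ u in (0:ℝ)..t, subIntegrand mmax D sIn k V rg Sz ζ u)
    -- uniform convergence in the Lévy–Prokhorov metric
    (hconv : ∀ ε : ℝ, 0 < ε → ∃ N : ℕ, ∀ n ≥ N, ∀ u ∈ Set.Icc (0:ℝ) T,
      prokhorovDist (ζn n u) (ζ u) ≤ ε) :
    ∀ t ∈ Set.Icc (0:ℝ) T,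
      Tendsto (fun n => Psi mmax D rg lam Q f (Szn n) (ζn n) t) atTop
        (nhds (Psi mmax D rg lam Q f Sz ζ t)) := by
  classical
  intro t ht
  -- basic facts
  have hmm : (0:ℝ) ≤ mmax := hyp.mmax_pos.le
  have hT0 : (0:ℝ) ≤ T := hT.le
  have hC0 : (0:ℝ) ≤ C := le_trans ENNReal.toReal_nonneg (hmass 0 ⟨le_rfl, hT0⟩)
  haveI hQP : IsProbabilityMeasure Q := hyp.Q_prob
  have hkV : (0:ℝ) ≤ k / V := le_of_lt (div_pos hyp.k_pos hyp.V_pos)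
  have hkg0 := hyp.kg_nonneg
  have hkl0 := hyp.klam_nonneg
  have hfc : Continuous f := hf.continuous
  have hf'c : Continuous (deriv f) := hf.continuous_deriv le_rfl
  -- clamped coefficient functions
  set rgc : ℝ → ℝ → ℝ := fun s x => rg (max s 0) (clampI mmax x) with hrgcdef
  set lamc : ℝ → ℝ → ℝ := fun s x => lam (max s 0) (clampI mmax x) with hlamcdef
  have hrgc_eqK : ∀ s : ℝ, ∀ x ∈ Set.Icc (0:ℝ) mmax, rgc s x = rg s x := by
    intro s x hx
    rw [hrgcdef]
    simp only
    rw [clampI_eq hx, ← hrg_ext]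
  have hlamc_eqK : ∀ s : ℝ, ∀ x ∈ Set.Icc (0:ℝ) mmax, lamc s x = lam s x := by
    intro s x hx
    rw [hlamcdef]
    simp only
    rw [clampI_eq hx, ← hlam_ext]
  have hrgc_cont : ∀ s, Continuous (rgc s) := by
    intro s
    exact hrg_cont.comp_continuous
      (continuous_const.prodMk (continuous_clampI mmax))
      (fun x => ⟨Set.mem_Ici.mpr (le_max_right s 0), clampI_mem hmm x⟩)
  have hlamc_cont : ∀ s, Continuous (lamc s) := by
    intro s
    exact hlam_cont.comp_continuous
      (continuous_const.prodMk (continuous_clampI mmax))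
      (fun x => ⟨Set.mem_Ici.mpr (le_max_right s 0), clampI_mem hmm x⟩)
  have hrgc_abs : ∀ s x, |rgc s x| ≤ gbar := by
    intro s x
    rw [abs_of_nonneg (hyp.rg_nonneg _ (le_max_right _ _) _ (clampI_mem hmm x))]
    exact hyp.rg_le _ (le_max_right _ _) _ (clampI_mem hmm x)
  have hlamc_abs : ∀ s x, |lamc s x| ≤ lamBar := by
    intro s x
    rw [abs_of_nonneg (hyp.lam_nonneg _ (le_max_right _ _) _ (clampI_mem hmm x))]
    exact hyp.lam_le _ (le_max_right _ _) _ (clampI_mem hmm x)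
  have hrgc_lip : ∀ s₁ s₂ x, |rgc s₁ x - rgc s₂ x| ≤ kg * |s₁ - s₂| := by
    intro s₁ s₂ x
    refine (hyp.rg_lip _ _ (le_max_right _ _) (le_max_right _ _) _ (clampI_mem hmm x)).trans ?_
    exact mul_le_mul_of_nonneg_left (abs_max_sub_max_le_abs s₁ s₂ 0) hkg0
  have hlamc_lip : ∀ s₁ s₂ x, |lamc s₁ x - lamc s₂ x| ≤ klam * |s₁ - s₂| := by
    intro s₁ s₂ x
    refine (hyp.lam_lip _ _ (le_max_right _ _) (le_max_right _ _) _
      (clampI_mem hmm x)).trans ?_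
    exact mul_le_mul_of_nonneg_left (abs_max_sub_max_le_abs s₁ s₂ 0) hkl0
  -- the Q-averaged fragmentation kernel
  set hh : ℝ → ℝ := fun x => ∫ α in Set.Icc (0:ℝ) 1,
    (f (α * x) + f ((1 - α) * x) - f x) ∂Q with hhdef
  have hhc : Continuous hh := chem_continuous_hQ hfc Q
  -- bounds on the compact set
  obtain ⟨Mf, hMf⟩ := isCompact_Icc.exists_bound_of_continuousOn
    (hfc.continuousOn (s := Set.Icc (0:ℝ) mmax))
  have hMf0 : 0 ≤ Mf := le_trans (norm_nonneg _) (hMf 0 ⟨le_rfl, hmm⟩)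
  obtain ⟨Mf', hMf'⟩ := isCompact_Icc.exists_bound_of_continuousOn
    (hf'c.continuousOn (s := Set.Icc (0:ℝ) mmax))
  have hMf'0 : 0 ≤ Mf' := le_trans (norm_nonneg _) (hMf' 0 ⟨le_rfl, hmm⟩)
  obtain ⟨MH, hMH⟩ := isCompact_Icc.exists_bound_of_continuousOn
    (hhc.continuousOn (s := Set.Icc (0:ℝ) mmax))
  have hMH0 : 0 ≤ MH := le_trans (norm_nonneg _) (hMH 0 ⟨le_rfl, hmm⟩)
  -- per-u convergence in the Lévy-Prokhorov sense
  have hedist : ∀ u ∈ Set.Icc (0:ℝ) T,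
      Tendsto (fun n => levyProkhorovEDist (ζn n u) (ζ u)) atTop (𝓝 0) := by
    intro u hu
    haveI : ∀ n, IsFiniteMeasure (ζn n u) := fun n => hfin_n n u
    haveI := hfin u
    rw [ENNReal.tendsto_nhds_zero]
    intro ε hε
    rcases eq_or_ne ε ⊤ with rfl | hεtop
    · exact Filter.Eventually.of_forall (fun _ => le_top)
    · have hεr : 0 < ε.toReal := ENNReal.toReal_pos hε.ne' hεtop
      obtain ⟨N, hN⟩ := hconv (ε.toReal / 2) (by linarith)
      rw [eventually_atTop]
      refine ⟨N, fun n hn => ?_⟩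
      have := chem_bridge (hN n hn u hu) (by linarith)
        (show ε.toReal/2 < ε.toReal by linarith)
      rwa [ENNReal.ofReal_toReal hεtop] at this
  have hweak : ∀ u ∈ Set.Icc (0:ℝ) T, ∀ g : ℝ → ℝ, Continuous g →
      Tendsto (fun n => ∫ x in Set.Icc (0:ℝ) mmax, g x ∂(ζn n u)) atTop
        (𝓝 (∫ x in Set.Icc (0:ℝ) mmax, g x ∂(ζ u))) := by
    intro u hu g hg
    haveI : ∀ n, IsFiniteMeasure (ζn n u) := fun n => hfin_n n u
    haveI := hfin u
    exact chem_setint_tendsto hmm (fun n => hsupp_n n u) (hsupp u) (hedist u hu) hg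
  -- the deviation functions a_n
  set aF : ℕ → ℝ → ℝ := fun n u =>
    |(∫ x in Set.Icc (0:ℝ) mmax, rgc (Sz u) x ∂(ζn n u))
      - ∫ x in Set.Icc (0:ℝ) mmax, rgc (Sz u) x ∂(ζ u)| with haFdef
  have haF_nn : ∀ n u, 0 ≤ aF n u := fun n u => abs_nonneg _
  have haF_bd : ∀ n, ∀ u ∈ Set.Icc (0:ℝ) T, aF n u ≤ 2 * gbar * C := by
    intro n u hu
    haveI := hfin_n n u
    haveI := hfin u
    have b1 : |∫ x in Set.Icc (0:ℝ) mmax, rgc (Sz u) x ∂(ζn n u)| ≤ gbar * C :=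
      le_trans (chem_setint_abs_bound measurableSet_Icc (fun x _ => hrgc_abs _ x))
        (mul_le_mul_of_nonneg_left (hmass_n n u hu) hyp.gbar_pos.le)
    have b2 : |∫ x in Set.Icc (0:ℝ) mmax, rgc (Sz u) x ∂(ζ u)| ≤ gbar * C :=
      le_trans (chem_setint_abs_bound measurableSet_Icc (fun x _ => hrgc_abs _ x))
        (mul_le_mul_of_nonneg_left (hmass u hu) hyp.gbar_pos.le)
    calc aF n u ≤ |∫ x in Set.Icc (0:ℝ) mmax, rgc (Sz u) x ∂(ζn n u)|
          + |∫ x in Set.Icc (0:ℝ) mmax, rgc (Sz u) x ∂(ζ u)| := abs_sub _ _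
      _ ≤ 2 * gbar * C := by linarith
  have hSz_aem : AEMeasurable Sz (volume.restrict (Set.Icc (0:ℝ) T)) :=
    hSz_cont.aemeasurable measurableSet_Icc
  have haF_meas : ∀ n, AEMeasurable (aF n) (volume.restrict (Set.Icc (0:ℝ) T)) := by
    intro n
    have m1 := chem_meas_integral_param (fun u => hfin_n n u) (hmeas_n n) hrgc_cont
      hkg0 hrgc_lip hSz_aem
    have m2 := chem_meas_integral_param hfin hmeas hrgc_cont hkg0 hrgc_lip hSz_aem
    have := (m1.sub m2).norm
    simpa [Real.norm_eq_abs, haFdef] using this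
  have haF_int : ∀ n, IntegrableOn (aF n) (Set.Icc (0:ℝ) T) volume := by
    intro n
    refine ⟨(haF_meas n).aestronglyMeasurable,
      HasFiniteIntegral.of_bounded (C := 2*gbar*C) ?_⟩
    filter_upwards [ae_restrict_mem measurableSet_Icc] with u hu
    rw [Real.norm_eq_abs, abs_of_nonneg (haF_nn n u)]
    exact haF_bd n u hu
  have haF_pt : ∀ u ∈ Set.Icc (0:ℝ) T, Tendsto (fun n => aF n u) atTop (𝓝 0) := by
    intro u hu
    have key := ((hweak u hu _ (hrgc_cont (Sz u))).sub (tendsto_const_nhds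
      (x := ∫ x in Set.Icc (0:ℝ) mmax, rgc (Sz u) x ∂(ζ u)))).abs
    simpa [haFdef] using key
  have hIA : Tendsto (fun n => ∫ u in Set.Icc (0:ℝ) T, aF n u) atTop (𝓝 0) := by
    have key := tendsto_integral_of_dominated_convergence
      (μ := volume.restrict (Set.Icc (0:ℝ) T)) (F := fun n u => aF n u)
      (f := fun _ => (0:ℝ)) (fun _ => 2*gbar*C)
      (fun n => (haF_meas n).aestronglyMeasurable) (integrable_const _)
      (fun n => by
        filter_upwards [ae_restrict_mem measurableSet_Icc] with u hu
        rw [Real.norm_eq_abs, abs_of_nonneg (haF_nn n u)]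
        exact haF_bd n u hu)
      (by
        filter_upwards [ae_restrict_mem measurableSet_Icc] with u hu
        exact haF_pt u hu)
    simpa using key
  -- the Gronwall constant and error bound
  set b : ℝ := D + (k/V) * (kg * C) with hbdef
  have hb0 : 0 ≤ b := by
    rw [hbdef]
    have := hyp.D_pos.le
    have := mul_nonneg hkV (mul_nonneg hkg0 hC0)
    linarith
  set A : ℕ → ℝ := fun n => ((k/V) * ∫ u in Set.Icc (0:ℝ) T, aF n u) * Real.exp (b * T)
    with hAdef
  have hIA_nn : ∀ n, 0 ≤ ∫ u in Set.Icc (0:ℝ) T, aF n u :=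
    fun n => setIntegral_nonneg measurableSet_Icc (fun u _ => haF_nn n u)
  have hA_nn : ∀ n, 0 ≤ A n := by
    intro n
    rw [hAdef]
    exact mul_nonneg (mul_nonneg hkV (hIA_nn n)) (Real.exp_pos _).le
  have hA0 : Tendsto A atTop (𝓝 0) := by
    have := (hIA.const_mul (k/V)).mul_const (Real.exp (b * T))
    simpa [hAdef] using this
  -- integrability of the substrate integrand
  have hsubint : ∀ (Sf : ℝ → ℝ), ContinuousOn Sf (Set.Icc 0 T) →
      ∀ (ξ : ℝ → Measure ℝ), (∀ u, IsFiniteMeasure (ξ u)) →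
      (∀ g : ℝ → ℝ, Continuous g →
        Measurable fun u => ∫ x in Set.Icc (0:ℝ) mmax, g x ∂ξ u) →
      (∀ u ∈ Set.Icc (0:ℝ) T, ((ξ u) (Set.Icc (0:ℝ) mmax)).toReal ≤ C) →
      ∀ t' ∈ Set.Icc (0:ℝ) T,
        IntervalIntegrable (subIntegrand mmax D sIn k V rg Sf ξ) volume 0 t' := by
    intro Sf hSf ξ hξfin hξmeas hξmass t' ht'
    rw [intervalIntegrable_iff_integrableOn_Ioc_of_le ht'.1]
    have hIocsub : Set.Ioc (0:ℝ) t' ⊆ Set.Icc (0:ℝ) T :=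
      fun u hu => ⟨hu.1.le, hu.2.trans ht'.2⟩
    have hrw : subIntegrand mmax D sIn k V rg Sf ξ = fun u =>
        D * (sIn - Sf u) - (k/V) * ∫ x in Set.Icc (0:ℝ) mmax, rgc (Sf u) x ∂ξ u := by
      funext u
      unfold subIntegrand
      congr 2
      exact setIntegral_congr_fun measurableSet_Icc (fun x hx => (hrgc_eqK _ x hx).symm)
    rw [hrw]
    have hSfm : AEMeasurable Sf (volume.restrict (Set.Ioc (0:ℝ) t')) :=
      (hSf.mono hIocsub).aemeasurable measurableSet_Ioc
    have hm2 := chem_meas_integral_param hξfin hξmeas hrgc_cont hkg0 hrgc_lip hSfm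
    have haem : AEMeasurable (fun u => D * (sIn - Sf u)
        - (k/V) * ∫ x in Set.Icc (0:ℝ) mmax, rgc (Sf u) x ∂ξ u)
        (volume.restrict (Set.Ioc (0:ℝ) t')) :=
      ((aemeasurable_const.sub hSfm).const_mul D).sub (hm2.const_mul (k/V))
    obtain ⟨MS, hMS⟩ := isCompact_Icc.exists_bound_of_continuousOn hSf
    refine ⟨haem.aestronglyMeasurable,
      HasFiniteIntegral.of_bounded (C := D * (|sIn| + MS) + (k/V) * (gbar * C)) ?_⟩
    filter_upwards [ae_restrict_mem measurableSet_Ioc] with u hu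
    have huT := hIocsub hu
    haveI := hξfin u
    rw [Real.norm_eq_abs]
    have h1 : |D * (sIn - Sf u)| ≤ D * (|sIn| + MS) := by
      rw [abs_mul, abs_of_nonneg hyp.D_pos.le]
      have hs1 : |Sf u| ≤ MS := by
        have := hMS u huT
        rwa [Real.norm_eq_abs] at this
      have hs2 : |sIn - Sf u| ≤ |sIn| + |Sf u| := abs_sub _ _
      have : |sIn - Sf u| ≤ |sIn| + MS := by linarith
      exact mul_le_mul_of_nonneg_left this hyp.D_pos.le
    have h2 : |(k/V) * ∫ x in Set.Icc (0:ℝ) mmax, rgc (Sf u) x ∂ξ u|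
        ≤ (k/V) * (gbar * C) := by
      rw [abs_mul, abs_of_nonneg hkV]
      refine mul_le_mul_of_nonneg_left ?_ hkV
      refine le_trans (chem_setint_abs_bound measurableSet_Icc
        (fun x _ => hrgc_abs _ x)) ?_
      exact mul_le_mul_of_nonneg_left (hξmass u huT) hyp.gbar_pos.le
    calc |D * (sIn - Sf u) - (k/V) * ∫ x in Set.Icc (0:ℝ) mmax, rgc (Sf u) x ∂ξ u|
        ≤ |D * (sIn - Sf u)|
          + |(k/V) * ∫ x in Set.Icc (0:ℝ) mmax, rgc (Sf u) x ∂ξ u| := abs_sub _ _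
      _ ≤ D * (|sIn| + MS) + (k/V) * (gbar * C) := by linarith
  -- Gronwall estimate: |Szn n - Sz| ≤ A n on [0,T]
  have hSdiff : ∀ n, ∀ u ∈ Set.Icc (0:ℝ) T, |Szn n u - Sz u| ≤ A n := by
    intro n
    set φ : ℝ → ℝ := fun u => |Szn n (clampI T u) - Sz (clampI T u)| with hφdef
    have hφ_eq : ∀ u ∈ Set.Icc (0:ℝ) T, φ u = |Szn n u - Sz u| := by
      intro u hu
      rw [hφdef]
      simp only
      rw [clampI_eq hu]
    have hmapT : ∀ x : ℝ, clampI T x ∈ Set.Icc (0:ℝ) T := clampI_mem hT0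
    have hφc : Continuous φ :=
      (((hSzn_cont n).comp_continuous (continuous_clampI T) hmapT).sub
        (hSz_cont.comp_continuous (continuous_clampI T) hmapT)).abs
    have hφnn : ∀ u, 0 ≤ φ u := fun u => abs_nonneg _
    have hineq : ∀ t' ∈ Set.Icc (0:ℝ) T, φ t' ≤ b * (∫ u in (0:ℝ)..t', φ u)
        + ((k/V) * ∫ u in Set.Icc (0:ℝ) T, aF n u) := by
      intro t' ht'
      have h0t' : (0:ℝ) ≤ t' := ht'.1
      have hIocsub : Set.Ioc (0:ℝ) t' ⊆ Set.Icc (0:ℝ) T :=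
        fun u hu => ⟨hu.1.le, hu.2.trans ht'.2⟩
      have hint_n := hsubint (Szn n) (hSzn_cont n) (ζn n) (hfin_n n) (hmeas_n n)
        (hmass_n n) t' ht'
      have hint_z := hsubint Sz hSz_cont ζ hfin hmeas hmass t' ht'
      have hdiffeq : Szn n t' - Sz t' = ∫ u in (0:ℝ)..t',
          (subIntegrand mmax D sIn k V rg (Szn n) (ζn n) u
            - subIntegrand mmax D sIn k V rg Sz ζ u) := by
        rw [intervalIntegral.integral_sub hint_n hint_z, hSzn_eq n t' ht', hSz_eq t' ht']
        ring
      rw [hφ_eq t' ht', hdiffeq]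
      have habs : |∫ u in (0:ℝ)..t',
          (subIntegrand mmax D sIn k V rg (Szn n) (ζn n) u
            - subIntegrand mmax D sIn k V rg Sz ζ u)|
          ≤ ∫ u in Set.Ioc (0:ℝ) t',
            |subIntegrand mmax D sIn k V rg (Szn n) (ζn n) u
              - subIntegrand mmax D sIn k V rg Sz ζ u| := by
        have key := intervalIntegral.norm_integral_le_integral_norm_uIoc (a := (0:ℝ))
          (b := t') (μ := volume)
          (f := fun u => subIntegrand mmax D sIn k V rg (Szn n) (ζn n) u
            - subIntegrand mmax D sIn k V rg Sz ζ u)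
        simpa [Set.uIoc_of_le h0t', Real.norm_eq_abs] using key
      refine habs.trans ?_
      -- pointwise bound
      have hptw : ∀ u ∈ Set.Ioc (0:ℝ) t',
          |subIntegrand mmax D sIn k V rg (Szn n) (ζn n) u
            - subIntegrand mmax D sIn k V rg Sz ζ u|
          ≤ b * φ u + (k/V) * aF n u := by
        intro u hu
        have huT := hIocsub hu
        haveI := hfin_n n u
        haveI := hfin u
        have i1 : IntegrableOn (rgc (Szn n u)) (Set.Icc (0:ℝ) mmax) (ζn n u) :=
          chem_integrableOn_K measurableSet_Icc
            ((hrgc_cont _).aestronglyMeasurable.restrict) (fun x _ => hrgc_abs _ x)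
        have i2 : IntegrableOn (rgc (Sz u)) (Set.Icc (0:ℝ) mmax) (ζn n u) :=
          chem_integrableOn_K measurableSet_Icc
            ((hrgc_cont _).aestronglyMeasurable.restrict) (fun x _ => hrgc_abs _ x)
        have e2 : ∫ x in Set.Icc (0:ℝ) mmax, rg (Szn n u) x ∂(ζn n u)
            = ∫ x in Set.Icc (0:ℝ) mmax, rgc (Szn n u) x ∂(ζn n u) :=
          setIntegral_congr_fun measurableSet_Icc (fun x hx => (hrgc_eqK _ x hx).symm)
        have e3 : ∫ x in Set.Icc (0:ℝ) mmax, rg (Sz u) x ∂(ζ u)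
            = ∫ x in Set.Icc (0:ℝ) mmax, rgc (Sz u) x ∂(ζ u) :=
          setIntegral_congr_fun measurableSet_Icc (fun x hx => (hrgc_eqK _ x hx).symm)
        have hJ1 : |(∫ x in Set.Icc (0:ℝ) mmax, rgc (Szn n u) x ∂(ζn n u))
            - ∫ x in Set.Icc (0:ℝ) mmax, rgc (Sz u) x ∂(ζn n u)|
            ≤ (kg * |Szn n u - Sz u|) * C := by
          refine le_trans (chem_setint_diff_bound measurableSet_Icc i1 i2
            (M := kg * |Szn n u - Sz u|) (fun x _ => hrgc_lip _ _ x)) ?_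
          exact mul_le_mul_of_nonneg_left (hmass_n n u huT)
            (mul_nonneg hkg0 (abs_nonneg _))
        have hJ2 : |(∫ x in Set.Icc (0:ℝ) mmax, rgc (Sz u) x ∂(ζn n u))
            - ∫ x in Set.Icc (0:ℝ) mmax, rgc (Sz u) x ∂(ζ u)| = aF n u := by
          rw [haFdef]
        have hY : |(∫ x in Set.Icc (0:ℝ) mmax, rgc (Szn n u) x ∂(ζn n u))
            - ∫ x in Set.Icc (0:ℝ) mmax, rgc (Sz u) x ∂(ζ u)|
            ≤ (kg * |Szn n u - Sz u|) * C + aF n u := by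
          refine le_trans (abs_sub_le _ (∫ x in Set.Icc (0:ℝ) mmax,
            rgc (Sz u) x ∂(ζn n u)) _) ?_
          rw [hJ2] at *
          linarith [hJ1]
        have e1 : subIntegrand mmax D sIn k V rg (Szn n) (ζn n) u
            - subIntegrand mmax D sIn k V rg Sz ζ u
            = -(D * (Szn n u - Sz u))
              - (k/V) * ((∫ x in Set.Icc (0:ℝ) mmax, rgc (Szn n u) x ∂(ζn n u))
                - ∫ x in Set.Icc (0:ℝ) mmax, rgc (Sz u) x ∂(ζ u)) := by
          unfold subIntegrand
          rw [e2, e3]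
          ring
        rw [e1, hφ_eq u huT]
        have habs1 : |-(D * (Szn n u - Sz u))
            - (k/V) * ((∫ x in Set.Icc (0:ℝ) mmax, rgc (Szn n u) x ∂(ζn n u))
              - ∫ x in Set.Icc (0:ℝ) mmax, rgc (Sz u) x ∂(ζ u))|
            ≤ D * |Szn n u - Sz u|
              + (k/V) * |(∫ x in Set.Icc (0:ℝ) mmax, rgc (Szn n u) x ∂(ζn n u))
                - ∫ x in Set.Icc (0:ℝ) mmax, rgc (Sz u) x ∂(ζ u)| := by
          refine le_trans (abs_sub _ _) ?_
          rw [abs_neg, abs_mul, abs_of_nonneg hyp.D_pos.le, abs_mul, abs_of_nonneg hkV]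
        have hmul := mul_le_mul_of_nonneg_left hY hkV
        have hbexp : D * |Szn n u - Sz u|
            + (k/V) * ((kg * |Szn n u - Sz u|) * C + aF n u)
            = b * |Szn n u - Sz u| + (k/V) * aF n u := by
          rw [hbdef]; ring
        linarith
      -- integrate the pointwise bound
      have hφ_int : IntegrableOn φ (Set.Ioc (0:ℝ) t') volume := hφc.integrableOn_Ioc
      have haF_int' : IntegrableOn (aF n) (Set.Ioc (0:ℝ) t') volume :=
        (haF_int n).mono_set hIocsub
      have hFd_int : IntegrableOn (fun u =>
          |subIntegrand mmax D sIn k V rg (Szn n) (ζn n) u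
            - subIntegrand mmax D sIn k V rg Sz ζ u|) (Set.Ioc (0:ℝ) t') volume := by
        have key := hint_n.sub hint_z
        rw [intervalIntegrable_iff_integrableOn_Ioc_of_le h0t'] at key
        exact key.abs
      calc (∫ u in Set.Ioc (0:ℝ) t',
            |subIntegrand mmax D sIn k V rg (Szn n) (ζn n) u
              - subIntegrand mmax D sIn k V rg Sz ζ u|)
          ≤ ∫ u in Set.Ioc (0:ℝ) t', (b * φ u + (k/V) * aF n u) :=
            setIntegral_mono_on hFd_int
              ((hφ_int.const_mul b).add (haF_int'.const_mul (k/V)))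
              measurableSet_Ioc hptw
        _ = b * (∫ u in Set.Ioc (0:ℝ) t', φ u)
            + (k/V) * ∫ u in Set.Ioc (0:ℝ) t', aF n u := by
            rw [integral_add (hφ_int.const_mul b) (haF_int'.const_mul (k/V)),
              integral_const_mul, integral_const_mul]
        _ ≤ b * (∫ u in (0:ℝ)..t', φ u) + (k/V) * ∫ u in Set.Icc (0:ℝ) T, aF n u := by
            have e5 : ∫ u in Set.Ioc (0:ℝ) t', φ u = ∫ u in (0:ℝ)..t', φ u :=
              (intervalIntegral.integral_of_le h0t').symm
            have h6 : (∫ u in Set.Ioc (0:ℝ) t', aF n u)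
                ≤ ∫ u in Set.Icc (0:ℝ) T, aF n u :=
              setIntegral_mono_set (haF_int n)
                (Filter.Eventually.of_forall (fun u => haF_nn n u))
                (HasSubset.Subset.eventuallyLE hIocsub)
            have := mul_le_mul_of_nonneg_left h6 hkV
            rw [e5]
            linarith
    have hgr := chem_gronwall hb0 (mul_nonneg hkV (hIA_nn n)) hφc hφnn hineq
    intro u hu
    have key := hgr u hu
    rw [hφ_eq u hu] at key
    rw [hAdef]
    exact key
  -- pointwise convergence of the substrate trajectories
  have hSpt : ∀ u ∈ Set.Icc (0:ℝ) T, Tendsto (fun n => Szn n u) atTop (𝓝 (Sz u)) := by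
    intro u hu
    have h1 : Tendsto (fun n => Sz u - A n) atTop (𝓝 (Sz u)) := by
      simpa using tendsto_const_nhds.sub hA0
    have h2 : Tendsto (fun n => Sz u + A n) atTop (𝓝 (Sz u)) := by
      simpa using tendsto_const_nhds.add hA0
    refine tendsto_of_tendsto_of_tendsto_of_le_of_le h1 h2 (fun n => ?_) (fun n => ?_)
    · linarith [(abs_le.mp (hSdiff n u hu)).1]
    · linarith [(abs_le.mp (hSdiff n u hu)).2]
  -- clamped population integrands
  set G1 : ℝ → ℝ → ℝ := fun s x => rgc s x * deriv f (clampI mmax x) with hG1def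
  set G2 : ℝ → ℝ → ℝ := fun s x => lamc s x * hh (clampI mmax x) with hG2def
  have hG1c : ∀ s, Continuous (G1 s) :=
    fun s => (hrgc_cont s).mul (hf'c.comp (continuous_clampI mmax))
  have hG2c : ∀ s, Continuous (G2 s) :=
    fun s => (hlamc_cont s).mul (hhc.comp (continuous_clampI mmax))
  have hG1lip : ∀ s₁ s₂ x, |G1 s₁ x - G1 s₂ x| ≤ (kg * Mf') * |s₁ - s₂| := by
    intro s₁ s₂ x
    have e : G1 s₁ x - G1 s₂ x = (rgc s₁ x - rgc s₂ x) * deriv f (clampI mmax x) := by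
      rw [hG1def]; ring
    rw [e, abs_mul]
    have hd : |deriv f (clampI mmax x)| ≤ Mf' := by
      have := hMf' _ (clampI_mem hmm x)
      rwa [Real.norm_eq_abs] at this
    calc |rgc s₁ x - rgc s₂ x| * |deriv f (clampI mmax x)|
        ≤ (kg * |s₁ - s₂|) * Mf' :=
          mul_le_mul (hrgc_lip s₁ s₂ x) hd (abs_nonneg _)
            (mul_nonneg hkg0 (abs_nonneg _))
      _ = (kg * Mf') * |s₁ - s₂| := by ring
  have hG2lip : ∀ s₁ s₂ x, |G2 s₁ x - G2 s₂ x| ≤ (klam * MH) * |s₁ - s₂| := by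
    intro s₁ s₂ x
    have e : G2 s₁ x - G2 s₂ x = (lamc s₁ x - lamc s₂ x) * hh (clampI mmax x) := by
      rw [hG2def]; ring
    rw [e, abs_mul]
    have hd : |hh (clampI mmax x)| ≤ MH := by
      have := hMH _ (clampI_mem hmm x)
      rwa [Real.norm_eq_abs] at this
    calc |lamc s₁ x - lamc s₂ x| * |hh (clampI mmax x)|
        ≤ (klam * |s₁ - s₂|) * MH :=
          mul_le_mul (hlamc_lip s₁ s₂ x) hd (abs_nonneg _)
            (mul_nonneg hkl0 (abs_nonneg _))
      _ = (klam * MH) * |s₁ - s₂| := by ring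
  have hG1bd : ∀ s x, |G1 s x| ≤ gbar * Mf' := by
    intro s x
    rw [hG1def]
    simp only
    rw [abs_mul]
    have hd : |deriv f (clampI mmax x)| ≤ Mf' := by
      have := hMf' _ (clampI_mem hmm x)
      rwa [Real.norm_eq_abs] at this
    exact mul_le_mul (hrgc_abs s x) hd (abs_nonneg _) hyp.gbar_pos.le
  have hG2bd : ∀ s x, |G2 s x| ≤ lamBar * MH := by
    intro s x
    rw [hG2def]
    simp only
    rw [abs_mul]
    have hd : |hh (clampI mmax x)| ≤ MH := by
      have := hMH _ (clampI_mem hmm x)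
      rwa [Real.norm_eq_abs] at this
    exact mul_le_mul (hlamc_abs s x) hd (abs_nonneg _) hyp.lamBar_pos.le
  -- rewriting the population integrand with clamped data
  have hpop_rw : ∀ (Sf : ℝ → ℝ) (ξ : ℝ → Measure ℝ) (u : ℝ),
      popIntegrand mmax D rg lam Q f Sf ξ u
      = (∫ x in Set.Icc (0:ℝ) mmax, G1 (Sf u) x ∂ξ u)
        + (∫ x in Set.Icc (0:ℝ) mmax, G2 (Sf u) x ∂ξ u)
        - D * ∫ x in Set.Icc (0:ℝ) mmax, f x ∂ξ u := by
    intro Sf ξ u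
    have e1 : ∫ x in Set.Icc (0:ℝ) mmax, rg (Sf u) x * deriv f x ∂ξ u
        = ∫ x in Set.Icc (0:ℝ) mmax, G1 (Sf u) x ∂ξ u := by
      refine setIntegral_congr_fun measurableSet_Icc (fun x hx => ?_)
      rw [hG1def]
      simp only
      rw [hrgc_eqK _ x hx, clampI_eq hx]
    have e2 : ∫ x in Set.Icc (0:ℝ) mmax, (∫ α in Set.Icc (0:ℝ) 1,
          lam (Sf u) x * (f (α * x) + f ((1 - α) * x) - f x) ∂Q) ∂ξ u
        = ∫ x in Set.Icc (0:ℝ) mmax, G2 (Sf u) x ∂ξ u := by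
      refine setIntegral_congr_fun measurableSet_Icc (fun x hx => ?_)
      rw [integral_const_mul]
      rw [hG2def]
      simp only
      rw [hlamc_eqK _ x hx, clampI_eq hx]
    unfold popIntegrand
    rw [e1, e2]
  -- pointwise convergence of popIntegrand
  have hpop_pt : ∀ u ∈ Set.Icc (0:ℝ) T,
      Tendsto (fun n => popIntegrand mmax D rg lam Q f (Szn n) (ζn n) u) atTop
        (𝓝 (popIntegrand mmax D rg lam Q f Sz ζ u)) := by
    intro u hu
    haveI : ∀ n, IsFiniteMeasure (ζn n u) := fun n => hfin_n n u
    haveI := hfin u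
    simp only [hpop_rw]
    have t3 := hweak u hu f hfc
    have split : ∀ (G : ℝ → ℝ → ℝ), (∀ s, Continuous (G s)) → ∀ L : ℝ, 0 ≤ L →
        (∀ s₁ s₂ x, |G s₁ x - G s₂ x| ≤ L * |s₁ - s₂|) →
        Tendsto (fun n => ∫ x in Set.Icc (0:ℝ) mmax, G (Szn n u) x ∂(ζn n u)) atTop
          (𝓝 (∫ x in Set.Icc (0:ℝ) mmax, G (Sz u) x ∂(ζ u))) := by
      intro G hGc L hL hGlip
      have base := hweak u hu (G (Sz u)) (hGc _)
      have diff0 : Tendsto (fun n =>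
          (∫ x in Set.Icc (0:ℝ) mmax, G (Szn n u) x ∂(ζn n u))
            - ∫ x in Set.Icc (0:ℝ) mmax, G (Sz u) x ∂(ζn n u)) atTop (𝓝 0) := by
        have hbd : ∀ nn : ℕ, ‖(∫ x in Set.Icc (0:ℝ) mmax, G (Szn nn u) x ∂(ζn nn u))
            - ∫ x in Set.Icc (0:ℝ) mmax, G (Sz u) x ∂(ζn nn u)‖ ≤ (L * C) * A nn := by
          intro nn
          have iG : ∀ s₀ : ℝ, IntegrableOn (G s₀) (Set.Icc (0:ℝ) mmax) (ζn nn u) := by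
            intro s₀
            obtain ⟨M, hM⟩ := isCompact_Icc.exists_bound_of_continuousOn
              ((hGc s₀).continuousOn (s := Set.Icc (0:ℝ) mmax))
            exact chem_integrableOn_K measurableSet_Icc
              ((hGc s₀).aestronglyMeasurable.restrict) hM
          rw [Real.norm_eq_abs]
          refine le_trans (chem_setint_diff_bound measurableSet_Icc (iG _) (iG _)
            (M := L * |Szn nn u - Sz u|) (fun x _ => hGlip _ _ x)) ?_
          have hm := hmass_n nn u hu
          have hs := hSdiff nn u hu
          have h1 : L * |Szn nn u - Sz u| * ((ζn nn u) (Set.Icc (0:ℝ) mmax)).toReal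
              ≤ L * |Szn nn u - Sz u| * C :=
            mul_le_mul_of_nonneg_left hm (mul_nonneg hL (abs_nonneg _))
          have h2 : L * |Szn nn u - Sz u| * C ≤ L * A nn * C := by
            have := mul_le_mul_of_nonneg_left hs hL
            exact mul_le_mul_of_nonneg_right this hC0
          calc L * |Szn nn u - Sz u| * ((ζn nn u) (Set.Icc (0:ℝ) mmax)).toReal
              ≤ L * A nn * C := le_trans h1 h2
            _ = (L * C) * A nn := by ring
        have hLA : Tendsto (fun nn => (L * C) * A nn) atTop (𝓝 0) := by
          simpa using hA0.const_mul (L * C)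
        exact squeeze_zero_norm hbd hLA
      have sum := diff0.add base
      rw [zero_add] at sum
      refine sum.congr (fun nn => ?_)
      ring
    have t1 := split G1 hG1c (kg * Mf') (mul_nonneg hkg0 hMf'0) hG1lip
    have t2 := split G2 hG2c (klam * MH) (mul_nonneg hkl0 hMH0) hG2lip
    exact (t1.add t2).sub (t3.const_mul D)
  -- uniform bound and time-measurability of popIntegrand
  set Mpop : ℝ := gbar * Mf' * C + lamBar * MH * C + D * (Mf * C) with hMpopdef
  have hIoct : Set.Ioc (0:ℝ) t ⊆ Set.Icc (0:ℝ) T :=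
    fun u hu => ⟨hu.1.le, hu.2.trans ht.2⟩
  have hpopdata : ∀ (Sf : ℝ → ℝ), ContinuousOn Sf (Set.Icc 0 T) →
      ∀ (ξ : ℝ → Measure ℝ), (∀ u, IsFiniteMeasure (ξ u)) →
      (∀ g : ℝ → ℝ, Continuous g →
        Measurable fun u => ∫ x in Set.Icc (0:ℝ) mmax, g x ∂ξ u) →
      (∀ u ∈ Set.Icc (0:ℝ) T, ((ξ u) (Set.Icc (0:ℝ) mmax)).toReal ≤ C) →
      AEStronglyMeasurable (popIntegrand mmax D rg lam Q f Sf ξ)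
        (volume.restrict (Set.Ioc (0:ℝ) t))
      ∧ ∀ u ∈ Set.Icc (0:ℝ) T, |popIntegrand mmax D rg lam Q f Sf ξ u| ≤ Mpop := by
    intro Sf hSf ξ hξfin hξmeas hξmass
    constructor
    · have hSfm : AEMeasurable Sf (volume.restrict (Set.Ioc (0:ℝ) t)) :=
        (hSf.mono hIoct).aemeasurable measurableSet_Ioc
      have m1 := chem_meas_integral_param hξfin hξmeas hG1c
        (mul_nonneg hkg0 hMf'0) hG1lip hSfm
      have m2 := chem_meas_integral_param hξfin hξmeas hG2c
        (mul_nonneg hkl0 hMH0) hG2lip hSfm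
      have m3 : Measurable fun u => ∫ x in Set.Icc (0:ℝ) mmax, f x ∂ξ u := hξmeas f hfc
      have key : AEMeasurable (fun u =>
          (∫ x in Set.Icc (0:ℝ) mmax, G1 (Sf u) x ∂ξ u)
          + (∫ x in Set.Icc (0:ℝ) mmax, G2 (Sf u) x ∂ξ u)
          - D * ∫ x in Set.Icc (0:ℝ) mmax, f x ∂ξ u)
          (volume.restrict (Set.Ioc (0:ℝ) t)) :=
        (m1.add m2).sub ((m3.aemeasurable.restrict).const_mul D)
      have e : popIntegrand mmax D rg lam Q f Sf ξ = fun u =>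
          (∫ x in Set.Icc (0:ℝ) mmax, G1 (Sf u) x ∂ξ u)
          + (∫ x in Set.Icc (0:ℝ) mmax, G2 (Sf u) x ∂ξ u)
          - D * ∫ x in Set.Icc (0:ℝ) mmax, f x ∂ξ u := funext (hpop_rw Sf ξ)
      rw [e]
      exact key.aestronglyMeasurable
    · intro u hu
      haveI := hξfin u
      rw [hpop_rw]
      have b1 : |∫ x in Set.Icc (0:ℝ) mmax, G1 (Sf u) x ∂ξ u| ≤ gbar * Mf' * C := by
        refine le_trans (chem_setint_abs_bound measurableSet_Icc
          (fun x _ => hG1bd _ x)) ?_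
        calc (gbar * Mf') * ((ξ u) (Set.Icc (0:ℝ) mmax)).toReal
            ≤ (gbar * Mf') * C := mul_le_mul_of_nonneg_left (hξmass u hu)
              (mul_nonneg hyp.gbar_pos.le hMf'0)
          _ = gbar * Mf' * C := by ring
      have b2 : |∫ x in Set.Icc (0:ℝ) mmax, G2 (Sf u) x ∂ξ u| ≤ lamBar * MH * C := by
        refine le_trans (chem_setint_abs_bound measurableSet_Icc
          (fun x _ => hG2bd _ x)) ?_
        calc (lamBar * MH) * ((ξ u) (Set.Icc (0:ℝ) mmax)).toReal
            ≤ (lamBar * MH) * C := mul_le_mul_of_nonneg_left (hξmass u hu)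
              (mul_nonneg hyp.lamBar_pos.le hMH0)
          _ = lamBar * MH * C := by ring
      have b3 : |D * ∫ x in Set.Icc (0:ℝ) mmax, f x ∂ξ u| ≤ D * (Mf * C) := by
        rw [abs_mul, abs_of_nonneg hyp.D_pos.le]
        refine mul_le_mul_of_nonneg_left ?_ hyp.D_pos.le
        refine le_trans (chem_setint_abs_bound measurableSet_Icc
          (fun x hx => (Real.norm_eq_abs _) ▸ hMf x hx)) ?_
        exact mul_le_mul_of_nonneg_left (hξmass u hu) hMf0
      have habs2 := abs_add_le (∫ x in Set.Icc (0:ℝ) mmax, G1 (Sf u) x ∂ξ u)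
        (∫ x in Set.Icc (0:ℝ) mmax, G2 (Sf u) x ∂ξ u)
      calc |(∫ x in Set.Icc (0:ℝ) mmax, G1 (Sf u) x ∂ξ u)
            + (∫ x in Set.Icc (0:ℝ) mmax, G2 (Sf u) x ∂ξ u)
            - D * ∫ x in Set.Icc (0:ℝ) mmax, f x ∂ξ u|
          ≤ |(∫ x in Set.Icc (0:ℝ) mmax, G1 (Sf u) x ∂ξ u)
            + (∫ x in Set.Icc (0:ℝ) mmax, G2 (Sf u) x ∂ξ u)|
            + |D * ∫ x in Set.Icc (0:ℝ) mmax, f x ∂ξ u| := abs_sub _ _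
        _ ≤ Mpop := by
            rw [hMpopdef]
            linarith
  have hm_n := fun n => hpopdata (Szn n) (hSzn_cont n) (ζn n) (hfin_n n)
    (hmeas_n n) (hmass_n n)
  have hm_z := hpopdata Sz hSz_cont ζ hfin hmeas hmass
  -- convergence of the time integrals
  have h3 : Tendsto (fun n => ∫ u in (0:ℝ)..t,
      popIntegrand mmax D rg lam Q f (Szn n) (ζn n) u) atTop
      (𝓝 (∫ u in (0:ℝ)..t, popIntegrand mmax D rg lam Q f Sz ζ u)) := by
    have e : ∀ (Sf : ℝ → ℝ) (ξ : ℝ → Measure ℝ),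
        (∫ u in (0:ℝ)..t, popIntegrand mmax D rg lam Q f Sf ξ u)
        = ∫ u in Set.Ioc (0:ℝ) t, popIntegrand mmax D rg lam Q f Sf ξ u :=
      fun Sf ξ => intervalIntegral.integral_of_le ht.1
    simp only [e]
    exact tendsto_integral_of_dominated_convergence (fun _ => Mpop)
      (fun n => (hm_n n).1) (integrable_const _)
      (fun n => by
        filter_upwards [ae_restrict_mem measurableSet_Ioc] with u hu
        rw [Real.norm_eq_abs]
        exact (hm_n n).2 u (hIoct hu))
      (by
        filter_upwards [ae_restrict_mem measurableSet_Ioc] with u hu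
        exact hpop_pt u (hIoct hu))
  have h1 := hweak t ht f hfc
  have h2 := hweak 0 ⟨le_rfl, hT0⟩ f hfc
  have final := (h1.sub h2).sub h3
  unfold Psi
  exact final
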